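/- For all i, j ∈ {1,2,3}, one has [P_i, P_j] = −Σ_k ε_{ijk} W^k as endomorphisms of V. -/
import Mathlib


open Finset

/-- Levi-Civita symbol on `{1,2,3}` (indexed by `Fin 3`). -/
def eps (i j k : Fin 3) : ℤ :=
  (((j : ℤ) - (i : ℤ)) * ((k : ℤ) - (i : ℤ)) * ((k : ℤ) - (j : ℤ))) / 2

variable {V : Type*} [AddCommGroup V] [Module ℂ V]

/-- `x^i_n`: equals the given `x^i_0` for `n = 0`, and `−(1/n) α^i_n` for `n ≠ 0`. -/
noncomputable def xop (α : Fin 3 → ℤ → Module.End ℂ V) (x0 : Fin 3 → Module.End ℂ V)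
    (i : Fin 3) (n : ℤ) : Module.End ℂ V :=
  if n = 0 then x0 i else (-(n : ℂ)⁻¹) • α i n

/-- `P_i = β_{i,0} + Σ_{j,k} ε_{ijk} x^j_0 W^k − ½ Σ_{j,k} ε_{ijk} Σ_{m∈ℤ} m x^j_{−m} x^k_m`,
defined pointwise on vectors (the inner sum has finitely many nonzero terms on each vector). -/
noncomputable def Pop (α β : Fin 3 → ℤ → Module.End ℂ V) (x0 : Fin 3 → Module.End ℂ V)
    (i : Fin 3) : V → V := fun v =>
  β i 0 v + (∑ j : Fin 3, ∑ k : Fin 3, eps i j k • (x0 j) ((α k 0) v))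
    - (2 : ℂ)⁻¹ • ∑ j : Fin 3, ∑ k : Fin 3, eps i j k •
        ∑ᶠ m : ℤ, (m : ℂ) • (xop α x0 j (-m)) ((xop α x0 k m) v)

/-- `x*_{i,n} = −(1/n)(β_{i,n} + Σ_{j,k} ε_{ijk} x^j_n W^k − ½ Σ_{j,k} ε_{ijk} Σ_m m x^j_{n−m} x^k_m)`
for `n ≠ 0`, defined pointwise on vectors. -/
noncomputable def xstarop (α β : Fin 3 → ℤ → Module.End ℂ V) (x0 : Fin 3 → Module.End ℂ V)
    (i : Fin 3) (n : ℤ) : V → V := fun v =>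
  (-(n : ℂ)⁻¹) • (β i n v + (∑ j : Fin 3, ∑ k : Fin 3, eps i j k • (xop α x0 j n) ((α k 0) v))
    - (2 : ℂ)⁻¹ • ∑ j : Fin 3, ∑ k : Fin 3, eps i j k •
        ∑ᶠ m : ℤ, (m : ℂ) • (xop α x0 j (n - m)) ((xop α x0 k m) v))

section Aux

lemma eps_swap : ∀ a b c : Fin 3, eps b a c = - eps a b c := by decide

lemma lie_swap' {f g h : Module.End ℂ V} (hh : ⁅f, g⁆ = h) (v : V) :
    f (g v) = g (f v) + h v := by
  have h2 : f * g = g * f + h := by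
    rw [Ring.lie_def] at hh
    rw [← hh]; abel
  calc f (g v) = (f * g) v := rfl
    _ = (g * f + h) v := by rw [h2]
    _ = g (f v) + h v := rfl

lemma lie_swap {f g : Module.End ℂ V} (hh : ⁅f, g⁆ = 0) (v : V) :
    f (g v) = g (f v) := by
  simpa using lie_swap' hh v

lemma lmap_finsum {ι : Type*} (g : V →ₗ[ℂ] V) {f : ι → V} (hf : (Function.support f).Finite) :
    g (∑ᶠ m, f m) = ∑ᶠ m, g (f m) :=
  g.toAddMonoidHom.map_finsum hf

variable (α β : Fin 3 → ℤ → Module.End ℂ V) (x0 : Fin 3 → Module.End ℂ V)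
variable (hR1 : ∀ (i j : Fin 3) (m n : ℤ), ⁅α i m, α j n⁆ = 0)
variable (hR4 : ∀ v : V, ∃ N : ℤ, ∀ (i : Fin 3) (n : ℤ), N ≤ n → α i n v = 0 ∧ β i n v = 0)
variable (hR5a : ∀ (i j : Fin 3) (n : ℤ), ⁅α j n, x0 i⁆ = 0)
variable (hR5b : ∀ i j : Fin 3, ⁅x0 i, x0 j⁆ = 0)

include hR1 hR5a in
lemma alpha_comm (p : Fin 3) (q : ℤ) (k : Fin 3) (m : ℤ) (v : V) :
    α p q (xop α x0 k m v) = xop α x0 k m (α p q v) := by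
  rcases eq_or_ne m 0 with h0 | h0
  · simp only [xop, if_pos h0]
    exact lie_swap (hR5a k p q) v
  · simp only [xop, if_neg h0, LinearMap.smul_apply, map_smul]
    rw [lie_swap (hR1 p k q m) v]

include hR5a hR5b in
lemma x0_comm (p k : Fin 3) (m : ℤ) (v : V) :
    x0 p (xop α x0 k m v) = xop α x0 k m (x0 p v) := by
  rcases eq_or_ne m 0 with h0 | h0
  · simp only [xop, if_pos h0]
    exact lie_swap (hR5b p k) v
  · simp only [xop, if_neg h0, LinearMap.smul_apply, map_smul]
    rw [lie_swap (hR5a p k m) v]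

include hR1 hR5a hR5b in
lemma xop_comm (p : Fin 3) (q : ℤ) (k : Fin 3) (m : ℤ) (v : V) :
    xop α x0 p q (xop α x0 k m v) = xop α x0 k m (xop α x0 p q v) := by
  rcases eq_or_ne q 0 with h0 | h0
  · rw [show xop α x0 p q = x0 p by simp [xop, h0]]
    exact x0_comm α x0 hR5a hR5b p k m v
  · rw [show xop α x0 p q = (-(q:ℂ)⁻¹) • α p q by simp [xop, h0]]
    simp only [LinearMap.smul_apply, map_smul]
    rw [alpha_comm α x0 hR1 hR5a p q k m v]

include hR1 hR4 in
lemma Fsupp (k l : Fin 3) (v : V) :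
    (Function.support fun m : ℤ => (m : ℂ) • xop α x0 k (-m) (xop α x0 l m v)).Finite := by
  obtain ⟨N, hN⟩ := hR4 v
  refine (Set.finite_Ioo (-N) N).subset ?_
  intro m hm
  rw [Function.mem_support] at hm
  rw [Set.mem_Ioo]
  constructor
  · by_contra h
    push_neg at h
    apply hm
    rcases eq_or_ne m 0 with h0 | h0
    · simp [h0]
    · have hm' : (-m : ℤ) ≠ 0 := by omega
      have hα : α k (-m) v = 0 := (hN k (-m) (by omega)).1
      have hswap := lie_swap (hR1 k l (-m) m) v
      simp [xop, h0, hm', hswap, hα]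
  · by_contra h
    push_neg at h
    apply hm
    rcases eq_or_ne m 0 with h0 | h0
    · simp [h0]
    · have hα : α l m v = 0 := (hN l m h).1
      simp [xop, h0, hα]


variable (hR2 : ∀ (i j : Fin 3) (m n : ℤ), ⁅β i m, α j n⁆
      = if i = j ∧ m + n = 0 then (m : ℂ) • (1 : Module.End ℂ V) else 0)
variable (hR6 : ∀ (i j : Fin 3) (n : ℤ), ⁅β j n, x0 i⁆
      = if i = j ∧ n = 0 then (1 : Module.End ℂ V) else 0)

include hR2 in
lemma beta0_alpha (b p : Fin 3) (q : ℤ) (v : V) :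
    β b 0 (α p q v) = α p q (β b 0 v) := by
  refine lie_swap ?_ v
  rw [hR2 b p 0 q]
  split_ifs <;> simp

include hR2 in
lemma beta0_xop (b p : Fin 3) {q : ℤ} (hq : q ≠ 0) (v : V) :
    β b 0 (xop α x0 p q v) = xop α x0 p q (β b 0 v) := by
  simp only [xop, if_neg hq, LinearMap.smul_apply, map_smul]
  rw [beta0_alpha α β hR2 b p q v]

include hR6 in
lemma beta0_x0 (b p : Fin 3) (v : V) :
    β b 0 (x0 p v) = x0 p (β b 0 v) + (if p = b then v else 0) := by
  rw [lie_swap' (hR6 p b 0) v]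
  congr 1
  by_cases hpb : p = b <;> simp [hpb]

/-- The quadratic operator `F_{kl} v = ∑ᶠ m, m • x^k_{-m} x^l_m v` as a linear map. -/
noncomputable def Flin (k l : Fin 3) : V →ₗ[ℂ] V where
  toFun v := ∑ᶠ m : ℤ, (m : ℂ) • xop α x0 k (-m) (xop α x0 l m v)
  map_add' u w := by
    rw [← finsum_add_distrib (Fsupp α β x0 hR1 hR4 k l u) (Fsupp α β x0 hR1 hR4 k l w)]
    exact finsum_congr fun m => by rw [map_add, map_add, smul_add]
  map_smul' c u := by
    rw [RingHom.id_apply, smul_finsum' c (Fsupp α β x0 hR1 hR4 k l u)]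
    exact finsum_congr fun m => by rw [map_smul, map_smul, smul_comm]

lemma Flin_apply (k l : Fin 3) (v : V) :
    Flin α β x0 hR1 hR4 k l v
      = ∑ᶠ m : ℤ, (m : ℂ) • xop α x0 k (-m) (xop α x0 l m v) := rfl

include hR1 hR4 in
lemma endo_comm_Flin (g : Module.End ℂ V)
    (hg : ∀ (c : Fin 3) (n : ℤ), n ≠ 0 → ∀ w : V, g (xop α x0 c n w) = xop α x0 c n (g w))
    (k l : Fin 3) (v : V) :
    g (Flin α β x0 hR1 hR4 k l v) = Flin α β x0 hR1 hR4 k l (g v) := by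
  rw [Flin_apply, Flin_apply, lmap_finsum g (Fsupp α β x0 hR1 hR4 k l v)]
  refine finsum_congr fun m => ?_
  rcases eq_or_ne m 0 with h0 | h0
  · simp [h0]
  · rw [map_smul, hg k (-m) (by omega), hg l m h0]

/-- `A_a = ∑_{pq} ε_{apq} x^p_0 W^q` as an endomorphism. -/
noncomputable def AEnd (a : Fin 3) : Module.End ℂ V :=
  ∑ p : Fin 3, ∑ q : Fin 3, eps a p q • (x0 p * α q 0)

lemma AEnd_apply (a : Fin 3) (v : V) :
    AEnd α x0 a v = ∑ p : Fin 3, ∑ q : Fin 3, eps a p q • x0 p (α q 0 v) := by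
  simp [AEnd]

include hR1 hR5a in
lemma alpha_comm_AEnd (p : Fin 3) (q : ℤ) (a : Fin 3) (v : V) :
    α p q (AEnd α x0 a v) = AEnd α x0 a (α p q v) := by
  rw [AEnd_apply, AEnd_apply, map_sum]
  refine Finset.sum_congr rfl fun c _ => ?_
  rw [map_sum]
  refine Finset.sum_congr rfl fun d _ => ?_
  rw [map_zsmul, lie_swap (hR5a c p q), lie_swap (hR1 p d q 0)]

include hR5a hR5b in
lemma x0_comm_AEnd (p a : Fin 3) (v : V) :
    x0 p (AEnd α x0 a v) = AEnd α x0 a (x0 p v) := by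
  rw [AEnd_apply, AEnd_apply, map_sum]
  refine Finset.sum_congr rfl fun c _ => ?_
  rw [map_sum]
  refine Finset.sum_congr rfl fun d _ => ?_
  rw [map_zsmul, lie_swap (hR5b p c), lie_swap (hR5a p d 0)]

include hR1 hR5a hR5b in
lemma xop_comm_AEnd (p : Fin 3) (q : ℤ) (a : Fin 3) (v : V) :
    xop α x0 p q (AEnd α x0 a v) = AEnd α x0 a (xop α x0 p q v) := by
  rcases eq_or_ne q 0 with h0 | h0
  · rw [show xop α x0 p q = x0 p by simp [xop, h0]]
    exact x0_comm_AEnd α x0 hR5a hR5b p a v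
  · rw [show xop α x0 p q = (-(q:ℂ)⁻¹) • α p q by simp [xop, h0]]
    simp only [LinearMap.smul_apply, map_smul]
    rw [alpha_comm_AEnd α x0 hR1 hR5a p q a v]

include hR2 hR6 in
lemma beta0_AEnd (b a : Fin 3) (v : V) :
    β b 0 (AEnd α x0 a v)
      = AEnd α x0 a (β b 0 v) + ∑ q : Fin 3, eps a b q • α q 0 v := by
  rw [AEnd_apply, AEnd_apply, map_sum]
  have step : ∀ p q : Fin 3, β b 0 (x0 p (α q 0 v))
      = x0 p (α q 0 (β b 0 v)) + (if p = b then α q 0 v else 0) := fun p q => by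
    rw [beta0_x0 β x0 hR6 b p (α q 0 v), beta0_alpha α β hR2 b q 0 v]
  calc ∑ p : Fin 3, β b 0 (∑ q : Fin 3, eps a p q • x0 p (α q 0 v))
      = ∑ p : Fin 3, ∑ q : Fin 3,
          (eps a p q • x0 p (α q 0 (β b 0 v)) + eps a p q • (if p = b then α q 0 v else 0)) := by
        refine Finset.sum_congr rfl fun p _ => ?_
        rw [map_sum]
        refine Finset.sum_congr rfl fun q _ => ?_
        rw [map_zsmul, step p q, smul_add]
    _ = (∑ p : Fin 3, ∑ q : Fin 3, eps a p q • x0 p (α q 0 (β b 0 v)))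
          + ∑ p : Fin 3, ∑ q : Fin 3, eps a p q • (if p = b then α q 0 v else 0) := by
        rw [← Finset.sum_add_distrib]
        exact Finset.sum_congr rfl fun p _ => by rw [Finset.sum_add_distrib]
    _ = (∑ p : Fin 3, ∑ q : Fin 3, eps a p q • x0 p (α q 0 (β b 0 v)))
          + ∑ q : Fin 3, eps a b q • α q 0 v := by
        congr 1
        have : ∀ p : Fin 3, ∑ q : Fin 3, eps a p q • (if p = b then α q 0 v else 0)
            = if p = b then ∑ q : Fin 3, eps a p q • α q 0 v else 0 := fun p => by
          by_cases hpb : p = b <;> simp [hpb]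
        simp only [this]
        rw [Finset.sum_ite_eq' Finset.univ b (fun p => ∑ q : Fin 3, eps a p q • α q 0 v)]
        simp

/-- `S_a = ∑_{pq} ε_{apq} F_{pq}` as a linear map. -/
noncomputable def SLin (a : Fin 3) : V →ₗ[ℂ] V :=
  ∑ p : Fin 3, ∑ q : Fin 3, eps a p q • Flin α β x0 hR1 hR4 p q

lemma SLin_apply (a : Fin 3) (v : V) :
    SLin α β x0 hR1 hR4 a v
      = ∑ p : Fin 3, ∑ q : Fin 3, eps a p q • Flin α β x0 hR1 hR4 p q v := by
  simp [SLin]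

include hR1 hR4 in
lemma endo_comm_SLin (g : Module.End ℂ V)
    (hg : ∀ (c : Fin 3) (n : ℤ), n ≠ 0 → ∀ w : V, g (xop α x0 c n w) = xop α x0 c n (g w))
    (a : Fin 3) (v : V) :
    g (SLin α β x0 hR1 hR4 a v) = SLin α β x0 hR1 hR4 a (g v) := by
  rw [SLin_apply, SLin_apply, map_sum]
  refine Finset.sum_congr rfl fun p _ => ?_
  rw [map_sum]
  refine Finset.sum_congr rfl fun q _ => ?_
  rw [map_zsmul, endo_comm_Flin α β x0 hR1 hR4 g hg p q v]


variable (hR3 : ∀ (i j : Fin 3) (m n : ℤ), ⁅β i m, β j n⁆ = ∑ k : Fin 3, eps i j k • α k (m + n))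

include hR3 in
lemma beta0_beta0 (a b : Fin 3) (v : V) :
    β a 0 (β b 0 v) = β b 0 (β a 0 v) + ∑ k : Fin 3, eps a b k • α k 0 v := by
  have h := lie_swap' (hR3 a b 0 0) v
  simpa using h

include hR1 hR4 hR5a hR5b in
lemma xop_comm_Flin (c : Fin 3) (n : ℤ) (p q : Fin 3) (v : V) :
    xop α x0 c n (Flin α β x0 hR1 hR4 p q v) = Flin α β x0 hR1 hR4 p q (xop α x0 c n v) :=
  endo_comm_Flin α β x0 hR1 hR4 (xop α x0 c n)
    (fun c' n' _ w => xop_comm α x0 hR1 hR5a hR5b c n c' n' w) p q v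

include hR1 hR2 hR4 in
lemma beta0_comm_SLin (b a : Fin 3) (v : V) :
    β b 0 (SLin α β x0 hR1 hR4 a v) = SLin α β x0 hR1 hR4 a (β b 0 v) :=
  endo_comm_SLin α β x0 hR1 hR4 (β b 0)
    (fun c n hn w => beta0_xop α β x0 hR2 b c hn w) a v

include hR1 hR4 hR5a hR5b in
lemma AEnd_comm_SLin (a b : Fin 3) (v : V) :
    AEnd α x0 a (SLin α β x0 hR1 hR4 b v) = SLin α β x0 hR1 hR4 b (AEnd α x0 a v) :=
  endo_comm_SLin α β x0 hR1 hR4 (AEnd α x0 a)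
    (fun c n _ w => (xop_comm_AEnd α x0 hR1 hR5a hR5b c n a w).symm) b v

include hR1 hR5a hR5b in
lemma AEnd_comm_AEnd (a b : Fin 3) (v : V) :
    AEnd α x0 a (AEnd α x0 b v) = AEnd α x0 b (AEnd α x0 a v) := by
  calc AEnd α x0 a (AEnd α x0 b v)
      = ∑ p : Fin 3, ∑ q : Fin 3, eps a p q • x0 p (α q 0 (AEnd α x0 b v)) :=
        AEnd_apply α x0 a _
    _ = ∑ p : Fin 3, ∑ q : Fin 3, eps a p q • AEnd α x0 b (x0 p (α q 0 v)) := by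
        refine Finset.sum_congr rfl fun p _ => Finset.sum_congr rfl fun q _ => ?_
        rw [alpha_comm_AEnd α x0 hR1 hR5a q 0 b v, x0_comm_AEnd α x0 hR5a hR5b p b (α q 0 v)]
    _ = AEnd α x0 b (∑ p : Fin 3, ∑ q : Fin 3, eps a p q • x0 p (α q 0 v)) := by
        rw [map_sum]
        refine Finset.sum_congr rfl fun p _ => ?_
        rw [map_sum]
        exact Finset.sum_congr rfl fun q _ => (map_zsmul _ _ _).symm
    _ = AEnd α x0 b (AEnd α x0 a v) := by rw [← AEnd_apply α x0 a v]

include hR1 hR4 hR5a hR5b in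
lemma Flin_comm_SLin (p q : Fin 3) (b : Fin 3) (w : V) :
    Flin α β x0 hR1 hR4 p q (SLin α β x0 hR1 hR4 b w)
      = SLin α β x0 hR1 hR4 b (Flin α β x0 hR1 hR4 p q w) :=
  endo_comm_SLin α β x0 hR1 hR4 (Flin α β x0 hR1 hR4 p q)
    (fun c n _ w' => (xop_comm_Flin α β x0 hR1 hR4 hR5a hR5b c n p q w').symm) b w

include hR1 hR4 hR5a hR5b in
lemma SLin_comm_SLin (a b : Fin 3) (v : V) :
    SLin α β x0 hR1 hR4 a (SLin α β x0 hR1 hR4 b v)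
      = SLin α β x0 hR1 hR4 b (SLin α β x0 hR1 hR4 a v) := by
  calc SLin α β x0 hR1 hR4 a (SLin α β x0 hR1 hR4 b v)
      = ∑ p : Fin 3, ∑ q : Fin 3, eps a p q
          • Flin α β x0 hR1 hR4 p q (SLin α β x0 hR1 hR4 b v) := SLin_apply α β x0 hR1 hR4 a _
    _ = ∑ p : Fin 3, ∑ q : Fin 3, eps a p q
          • SLin α β x0 hR1 hR4 b (Flin α β x0 hR1 hR4 p q v) := by
        refine Finset.sum_congr rfl fun p _ => Finset.sum_congr rfl fun q _ => ?_
        rw [Flin_comm_SLin α β x0 hR1 hR4 hR5a hR5b p q b v]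
    _ = SLin α β x0 hR1 hR4 b (∑ p : Fin 3, ∑ q : Fin 3, eps a p q
          • Flin α β x0 hR1 hR4 p q v) := by
        rw [map_sum]
        refine Finset.sum_congr rfl fun p _ => ?_
        rw [map_sum]
        exact Finset.sum_congr rfl fun q _ => (map_zsmul _ _ _).symm
    _ = SLin α β x0 hR1 hR4 b (SLin α β x0 hR1 hR4 a v) := by
        rw [← SLin_apply α β x0 hR1 hR4 a v]

end Aux

section Final

variable (α β : Fin 3 → ℤ → Module.End ℂ V) (x0 : Fin 3 → Module.End ℂ V)
variable (hR1 : ∀ (i j : Fin 3) (m n : ℤ), ⁅α i m, α j n⁆ = 0)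
variable (hR4 : ∀ v : V, ∃ N : ℤ, ∀ (i : Fin 3) (n : ℤ), N ≤ n → α i n v = 0 ∧ β i n v = 0)

include hR1 hR4 in
lemma Pop_eq (a : Fin 3) (v : V) :
    Pop α β x0 a v
      = β a 0 v + AEnd α x0 a v - (2 : ℂ)⁻¹ • SLin α β x0 hR1 hR4 a v := by
  rw [SLin_apply α β x0 hR1 hR4 a v, AEnd_apply α x0 a v]
  rfl

end Final

/-- `[P_i, P_j] = −Σ_k ε_{ijk} W^k` (as endomorphisms, checked pointwise). -/
theorem P_P_commutator
    (α β : Fin 3 → ℤ → Module.End ℂ V) (x0 : Fin 3 → Module.End ℂ V)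
    (R1 : ∀ (i j : Fin 3) (m n : ℤ), ⁅α i m, α j n⁆ = 0)
    (R2 : ∀ (i j : Fin 3) (m n : ℤ), ⁅β i m, α j n⁆
      = if i = j ∧ m + n = 0 then (m : ℂ) • (1 : Module.End ℂ V) else 0)
    (R3 : ∀ (i j : Fin 3) (m n : ℤ), ⁅β i m, β j n⁆ = ∑ k : Fin 3, eps i j k • α k (m + n))
    (R4 : ∀ v : V, ∃ N : ℤ, ∀ (i : Fin 3) (n : ℤ), N ≤ n → α i n v = 0 ∧ β i n v = 0)
    (R5a : ∀ (i j : Fin 3) (n : ℤ), ⁅α j n, x0 i⁆ = 0)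
    (R5b : ∀ i j : Fin 3, ⁅x0 i, x0 j⁆ = 0)
    (R6 : ∀ (i j : Fin 3) (n : ℤ), ⁅β j n, x0 i⁆
      = if i = j ∧ n = 0 then (1 : Module.End ℂ V) else 0)
    (i j : Fin 3) (v : V) :
    Pop α β x0 i (Pop α β x0 j v) - Pop α β x0 j (Pop α β x0 i v)
      = -∑ k : Fin 3, eps i j k • (α k 0) v := by
  have hP : ∀ (a : Fin 3) (w : V), Pop α β x0 a w
      = β a 0 w + AEnd α x0 a w - (2 : ℂ)⁻¹ • SLin α β x0 R1 R4 a w :=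
    Pop_eq α β x0 R1 R4
  have hswap : ∀ w : V, (∑ q : Fin 3, eps j i q • α q 0 w)
      = -∑ k : Fin 3, eps i j k • α k 0 w := fun w => by
    rw [← Finset.sum_neg_distrib]
    exact Finset.sum_congr rfl fun q _ => by rw [eps_swap i j q, neg_smul]
  have he1 : β i 0 (β j 0 v) = β j 0 (β i 0 v) + ∑ k : Fin 3, eps i j k • α k 0 v :=
    beta0_beta0 α β R3 i j v
  have he2 : β i 0 (AEnd α x0 j v)
      = AEnd α x0 j (β i 0 v) + -∑ k : Fin 3, eps i j k • α k 0 v := by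
    rw [beta0_AEnd α β x0 R2 R6 i j v, hswap]
  have he3 : AEnd α x0 i (β j 0 v)
      = β j 0 (AEnd α x0 i v) + -∑ k : Fin 3, eps i j k • α k 0 v := by
    have h := beta0_AEnd α β x0 R2 R6 j i v
    rw [h]
    abel
  have he4 : AEnd α x0 i (AEnd α x0 j v) = AEnd α x0 j (AEnd α x0 i v) :=
    AEnd_comm_AEnd α x0 R1 R5a R5b i j v
  have he5 : β i 0 (SLin α β x0 R1 R4 j v) = SLin α β x0 R1 R4 j (β i 0 v) :=
    beta0_comm_SLin α β x0 R1 R4 R2 i j v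
  have he5' : SLin α β x0 R1 R4 i (β j 0 v) = β j 0 (SLin α β x0 R1 R4 i v) :=
    (beta0_comm_SLin α β x0 R1 R4 R2 j i v).symm
  have he6 : AEnd α x0 i (SLin α β x0 R1 R4 j v) = SLin α β x0 R1 R4 j (AEnd α x0 i v) :=
    AEnd_comm_SLin α β x0 R1 R4 R5a R5b i j v
  have he6' : SLin α β x0 R1 R4 i (AEnd α x0 j v) = AEnd α x0 j (SLin α β x0 R1 R4 i v) :=
    (AEnd_comm_SLin α β x0 R1 R4 R5a R5b j i v).symm
  have he7 : SLin α β x0 R1 R4 i (SLin α β x0 R1 R4 j v)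
      = SLin α β x0 R1 R4 j (SLin α β x0 R1 R4 i v) :=
    SLin_comm_SLin α β x0 R1 R4 R5a R5b i j v
  simp only [hP, map_add, map_sub, map_smul]
  rw [he1, he2, he3, he4, he5, he5', he6, he6', he7]
  simp only [smul_add, smul_sub]
  abel
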